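/- Let Φ be a root system with simple roots α_1,...,α_r and fundamental weights ω_1,...,ω_r. For each i, let R(i) be the set of positive roots whose expansion in simple roots has nonzero coefficient of α_i. Then the map α ↦ s_α(ω_i) is injective from R(i) into the Weyl group orbit W·ω_i minus {ω_i}, and s_α(ω_i) = ω_i for positive roots α not in R(i). -/

import Mathlib

/-- The reflection in the vector `β`, acting on `v` by
`s_β(v) = v - (v, β^∨) β` where `β^∨ = 2β/(β,β)`. -/
noncomputable def reflAlong {V : Type*} [NormedAddCommGroup V] [InnerProductSpace ℝ V]
    (β v : V) : V :=
  v - (2 * (inner ℝ v β : ℝ) / (inner ℝ β β : ℝ)) • β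

/-- Let `Φ` be a (reduced) root system with positive roots `Pos`, simple roots
`α_1,...,α_r`, and fundamental weights `ω_1,...,ω_r` (characterized by
`(ω_i, α_j^∨) = δ_{ij}`).  Let `R(i)` be the set of positive roots whose expansion
in the simple roots has nonzero coefficient of `α_i`.  Then `α ↦ s_α(ω_i)` is
injective on `R(i)`, sends each `α ∈ R(i)` into the Weyl group orbit `W·ω_i` minus
`{ω_i}`, and `s_α(ω_i) = ω_i` for every positive root `α ∉ R(i)`. -/
theorem stmt_9 {V : Type*} [NormedAddCommGroup V] [InnerProductSpace ℝ V]
    (r : ℕ) (Φ Pos : Finset V)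
    (hPosSub : ↑Pos ⊆ (Φ : Set V)) (hzero : (0 : V) ∉ Φ)
    (hPosNeg : ∀ β : V, β ∈ Φ ↔ (β ∈ Pos ∨ -β ∈ Pos))
    (hreduced : ∀ β ∈ Pos, ∀ γ ∈ Pos, ∀ t : ℝ, β = t • γ → β = γ)
    (α : Fin r → V) (hα : ∀ i, α i ∈ Pos)
    (coeff : V → Fin r → ℝ)
    (hcoeff : ∀ β ∈ Pos, β = ∑ j, coeff β j • α j ∧ ∀ j, 0 ≤ coeff β j)
    (ω : Fin r → V)
    (hω : ∀ i j, (2 * (inner ℝ (ω i) (α j) : ℝ) / (inner ℝ (α j) (α j) : ℝ))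
            = if i = j then 1 else 0)
    (i : Fin r) :
    Set.InjOn (fun β => reflAlong β (ω i)) {β | β ∈ Pos ∧ coeff β i ≠ 0} ∧
    (∀ β ∈ Pos, coeff β i ≠ 0 →
      (∃ l : List V, (∀ γ ∈ l, γ ∈ Φ) ∧ reflAlong β (ω i) = l.foldr reflAlong (ω i)) ∧
        reflAlong β (ω i) ≠ ω i) ∧
    (∀ β ∈ Pos, coeff β i = 0 → reflAlong β (ω i) = ω i) := by
  have hne : ∀ β ∈ Pos, β ≠ (0:V) := by
    intro β hβ h0
    exact hzero (h0 ▸ hPosSub hβ)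
  have hself : ∀ β ∈ Pos, (0:ℝ) < inner ℝ β β := fun β hβ =>
    lt_of_le_of_ne real_inner_self_nonneg
      (fun h => hne β hβ ((inner_self_eq_zero (𝕜 := ℝ)).mp h.symm))
  have hωα : ∀ j, (inner ℝ (ω i) (α j) : ℝ) = (if i = j then 1 else 0) * (inner ℝ (α j) (α j) : ℝ) / 2 := by
    intro j
    have hd := (hself _ (hα j)).ne'
    have h := hω i j
    field_simp at h ⊢
    linarith
  have key : ∀ β ∈ Pos, (inner ℝ (ω i) β : ℝ) = coeff β i * (inner ℝ (α i) (α i) : ℝ) / 2 := by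
    intro β hβ
    obtain ⟨hexp, -⟩ := hcoeff β hβ
    conv_lhs => rw [hexp]
    rw [inner_sum]
    simp only [real_inner_smul_right, hωα, mul_ite, mul_one, mul_zero, ite_mul, zero_mul,
      mul_div_assoc, zero_div]
    rw [Finset.sum_eq_single i]
    · simp
    · intro j _ hj
      simp [Ne.symm hj]
    · simp
  have hcpos : ∀ β ∈ Pos, coeff β i ≠ 0 →
      (0:ℝ) < 2 * (inner ℝ (ω i) β : ℝ) / (inner ℝ β β : ℝ) := by
    intro β hβ hc
    have h1 := (hcoeff β hβ).2 i
    have h2 : (0:ℝ) < coeff β i := lt_of_le_of_ne h1 (Ne.symm hc)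
    rw [key β hβ]
    have := hself _ (hα i)
    have := hself β hβ
    positivity
  refine ⟨?_, ?_, ?_⟩
  · rintro β ⟨hβ, hcβ⟩ γ ⟨hγ, hcγ⟩ h
    simp only [reflAlong, sub_right_inj] at h
    have hb := hcpos β hβ hcβ
    have hβeq : β = ((2 * (inner ℝ (ω i) β : ℝ) / (inner ℝ β β : ℝ))⁻¹
        * (2 * (inner ℝ (ω i) γ : ℝ) / (inner ℝ γ γ : ℝ))) • γ := by
      rw [mul_smul, ← h, smul_smul, inv_mul_cancel₀ hb.ne', one_smul]
    exact hreduced β hβ γ hγ _ hβeq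
  · intro β hβ hc
    refine ⟨⟨[β], by simpa using hPosSub hβ, by simp⟩, ?_⟩
    simp only [reflAlong, ne_eq, sub_eq_self]
    intro h
    have hcp := hcpos β hβ hc
    exact hne β hβ (by
      rcases smul_eq_zero.mp h with h1 | h1
      · exact absurd h1 hcp.ne'
      · exact h1)
  · intro β hβ hc
    simp [reflAlong, key β hβ, hc]
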